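/- Let 0 → I → A → A₀ → 0 be a square-zero extension of rings, B a flat A-algebra, and set B₀ = B ⊗_A A₀. Then for any B₀-module F, there is a natural isomorphism Tor₁^B(F, B₀) ≅ I ⊗_{A₀} F. -/

import Mathlib

open CategoryTheory CategoryTheory.Limits CategoryTheory.Projective TensorProduct

universe v' u' u

namespace Stmt3Aux

section Resolution

variable {C : Type u'} [Category.{v'} C] [Abelian C] [EnoughProjectives C]

variable {Z X₀ X₁ : C} (π₀ : X₀ ⟶ Z) (d₀ : X₁ ⟶ X₀)

/-- The chain complex starting with prescribed `X₀, X₁, d₀` and continued by syzygies. -/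
noncomputable def cpx : ChainComplex C ℕ :=
  ChainComplex.mk X₀ X₁ (syzygies d₀) d₀ (Projective.d d₀) ((Category.assoc _ _ _).trans (by rw [kernel.condition]; exact comp_zero))
    (fun S => ⟨syzygies S.f, Projective.d S.f, (Category.assoc _ _ _).trans (by rw [kernel.condition]; exact comp_zero)⟩)

@[simp] lemma cpx_X_0 : (cpx d₀).X 0 = X₀ := rfl
@[simp] lemma cpx_X_1 : (cpx d₀).X 1 = X₁ := rfl
@[simp] lemma cpx_d_1_0 : (cpx d₀).d 1 0 = d₀ := by
  apply ChainComplex.mk_d_1_0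
@[simp] lemma cpx_d_2_1 : (cpx d₀).d 2 1 = Projective.d d₀ := by
  apply ChainComplex.mk_d_2_1

lemma cpx_exactAt_succ (n : ℕ) : (cpx d₀).ExactAt (n + 1) := by
  rw [HomologicalComplex.exactAt_iff' _ (n + 1 + 1) (n + 1) n (by simp) (by simp)]
  match n with
  | 0 =>
    refine ShortComplex.exact_of_iso ?_ (exact_d_f d₀)
    exact ShortComplex.isoMk (Iso.refl _) (Iso.refl _) (Iso.refl _)
      ((Category.id_comp _).trans ((cpx_d_2_1 d₀).trans (Category.comp_id _).symm))
      ((Category.id_comp _).trans ((cpx_d_1_0 d₀).trans (Category.comp_id _).symm))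
  | n + 1 =>
    have hs : Projective.d d₀ ≫ d₀ = 0 :=
      (Category.assoc _ _ _).trans (by rw [kernel.condition]; exact comp_zero)
    let sc := fun S : ShortComplex C => (⟨syzygies S.f, Projective.d S.f,
        (Category.assoc _ _ _).trans (by rw [kernel.condition]; exact comp_zero)⟩ :
          Σ' (X₃ : C) (d₂ : X₃ ⟶ S.X₁), d₂ ≫ S.f = 0)
    have h := ChainComplex.mk_d X₀ X₁ (syzygies d₀) d₀ (Projective.d d₀) hs sc n
    let e := ChainComplex.mkXIso X₀ X₁ (syzygies d₀) d₀ (Projective.d d₀) hs sc n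
    refine ShortComplex.exact_of_iso ?_ (exact_d_f ((cpx d₀).d (n + 2) (n + 1)))
    exact ShortComplex.isoMk e.symm (Iso.refl _) (Iso.refl _)
      ((Iso.inv_comp_eq e).2 ((h.trans (Category.comp_id _).symm).trans (Category.assoc _ _ _)))
      ((Category.id_comp _).trans (Category.comp_id _).symm)

instance [Projective X₀] [Projective X₁] (n : ℕ) : Projective ((cpx d₀).X n) := by
  obtain (_ | _ | _ | n) := n
  · exact (inferInstance : Projective X₀)
  · exact (inferInstance : Projective X₁)
  · apply Projective.projective_over
  · apply Projective.projective_over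

/-- A projective resolution with prescribed beginning. -/
noncomputable def resolution [Projective X₀] [Projective X₁] [Epi π₀]
    (s : d₀ ≫ π₀ = 0) (hex : (ShortComplex.mk d₀ π₀ s).Exact) :
    ProjectiveResolution Z where
  complex := cpx d₀
  π := (ChainComplex.toSingle₀Equiv _ _).symm ⟨π₀, by rw [cpx_d_1_0]; exact s⟩
  quasiIso := ⟨fun n => by
    cases n with
    | zero =>
      rw [ChainComplex.quasiIsoAt₀_iff, ShortComplex.quasiIso_iff_of_zeros']
      · refine (ShortComplex.exact_and_epi_g_iff_of_iso ?_).2 ⟨hex, inferInstance⟩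
        exact ShortComplex.isoMk (Iso.refl _) (Iso.refl _) (Iso.refl _)
          ((Category.id_comp _).trans ((cpx_d_1_0 d₀).symm.trans (Category.comp_id _).symm))
          ((Category.id_comp _).trans ((ChainComplex.toSingle₀Equiv_symm_apply_f_zero (C := cpx d₀) π₀
            (by rw [cpx_d_1_0]; exact s)).symm.trans (Category.comp_id _).symm))
      all_goals rfl
    | succ n =>
      rw [quasiIsoAt_iff_exactAt']
      · apply cpx_exactAt_succ
      · apply ChainComplex.exactAt_succ_single_obj⟩

end Resolution

section Equiv

variable {A B : Type u} [CommRing A] [CommRing B] [Algebra A B] [Module.Flat A B]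
  (I : Ideal A) (J : Ideal B)
  (F : Type u) [AddCommGroup F] [Module B F] [Module A F] [IsScalarTower A B F]

/-- The multiplication map `B ⊗[A] I →ₗ[B] B`. -/
noncomputable def muMap : B ⊗[A] I →ₗ[B] B :=
  (TensorProduct.AlgebraTensorModule.rid A B B).toLinearMap ∘ₗ
    TensorProduct.AlgebraTensorModule.map (LinearMap.id : B →ₗ[B] B) I.subtype

@[simp] lemma muMap_tmul (b : B) (i : I) :
    muMap (A := A) I (b ⊗ₜ i) = (i : A) • b := rfl

lemma muMap_injective : Function.Injective (muMap (A := A) (B := B) I) := by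
  have h1 : Function.Injective (LinearMap.lTensor B I.subtype) :=
    Module.Flat.lTensor_preserves_injective_linearMap I.subtype (Submodule.injective_subtype I)
  have h2 : ∀ x : B ⊗[A] I,
      (TensorProduct.AlgebraTensorModule.map (LinearMap.id : B →ₗ[B] B) I.subtype) x =
        LinearMap.lTensor B I.subtype x := by
    intro x
    induction x using TensorProduct.induction_on with
    | zero => simp
    | tmul b i => simp
    | add x y hx hy => simp [map_add, hx, hy]
  intro x y hxy
  apply h1
  rw [← h2, ← h2]
  exact (TensorProduct.AlgebraTensorModule.rid A B B).injective
    (by simpa [muMap] using hxy)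

lemma muMap_range (hJdef : J = I.map (algebraMap A B)) :
    LinearMap.range (muMap (A := A) I) = (J : Submodule B B) := by
  subst hJdef
  apply le_antisymm
  · rintro _ ⟨x, rfl⟩
    induction x using TensorProduct.induction_on with
    | zero => simp
    | tmul b i =>
      rw [muMap_tmul, Algebra.smul_def]
      exact Ideal.mul_mem_right b _ (Ideal.mem_map_of_mem _ i.2)
    | add x y hx hy => rw [map_add]; exact Submodule.add_mem _ hx hy
  · have : Ideal.map (algebraMap A B) I ≤ (LinearMap.range (muMap (A := A) I) : Ideal B) := by
      rw [Ideal.map_le_iff_le_comap]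
      intro i hi
      rw [Ideal.mem_comap]
      exact ⟨(1 : B) ⊗ₜ ⟨i, hi⟩, by simp [Algebra.smul_def]⟩
    exact this

/-- `B ⊗[A] I ≃ₗ[B] J`. -/
noncomputable def eJ (hJdef : J = I.map (algebraMap A B)) : (B ⊗[A] I) ≃ₗ[B] J :=
  (LinearEquiv.ofInjective _ (muMap_injective I)).trans
    (LinearEquiv.ofEq _ _ (muMap_range I J hJdef))

/-- The main equivalence `F ⊗[B] J ≃ₗ[B] F ⊗[A] I`. -/
noncomputable def EE (hJdef : J = I.map (algebraMap A B)) :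
    (F ⊗[B] J) ≃ₗ[B] F ⊗[A] I :=
  (TensorProduct.congr (LinearEquiv.refl B F) (eJ I J hJdef).symm).trans
    (TensorProduct.AlgebraTensorModule.cancelBaseChange A B B F I)

end Equiv

end Stmt3Aux

/-- Let `0 → I → A → A₀ → 0` be a square-zero extension of
rings, `B` a flat `A`-algebra, and `B₀ = B ⊗_A A₀ = B/IB`.  Then for any
`B₀`-module `F` (i.e. a `B`-module killed by `J = IB`) there is a natural
isomorphism `Tor₁^B(F, B₀) ≅ I ⊗_{A₀} F` (the latter canonically identified
with `F ⊗_A I`, since `F` is killed by `I`). -/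
theorem stmt3 {A A₀ B : Type u} [CommRing A] [CommRing A₀] [CommRing B]
    [Algebra A A₀] [Algebra A B] [Module.Flat A B]
    (hsurj : Function.Surjective (algebraMap A A₀))
    (I : Ideal A) (hIdef : I = RingHom.ker (algebraMap A A₀)) (hI2 : I * I = ⊥)
    (J : Ideal B) (hJdef : J = I.map (algebraMap A B))
    (F : Type u) [AddCommGroup F] [Module B F] [Module A F] [IsScalarTower A B F]
    (hF : ∀ x ∈ J, ∀ f : F, x • f = 0) :
    Nonempty
      ((((Tor (ModuleCat.{u} B) 1).obj (ModuleCat.of B F)).obj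
          (ModuleCat.of B (B ⧸ J))) ≅
        ModuleCat.of B (TensorProduct A F ↥I)) := by
  constructor
  -- Setup
  let Fc : ModuleCat.{u} B := ModuleCat.of B F
  let G := (MonoidalCategory.tensoringLeft (ModuleCat.{u} B)).obj Fc
  haveI : PreservesColimits G :=
    (inferInstance : PreservesColimits (MonoidalCategory.tensorLeft Fc))
  let Jc : ModuleCat.{u} B := ModuleCat.of B (↥J)
  let X₀ : ModuleCat.{u} B := ModuleCat.of B B
  let X₁ : ModuleCat.{u} B := Projective.over Jc
  let q : X₁ ⟶ Jc := Projective.π Jc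
  let ι : Jc ⟶ X₀ := ModuleCat.ofHom J.subtype
  let π₀ : X₀ ⟶ ModuleCat.of B (B ⧸ J) := ModuleCat.ofHom J.mkQ
  let d₀ : X₁ ⟶ X₀ := q ≫ ι
  haveI : Projective X₀ := ModuleCat.projective_of_free (Module.Basis.singleton PUnit.{u+1} B)
  haveI : Epi π₀ := by
    rw [ModuleCat.epi_iff_surjective]; exact Submodule.mkQ_surjective J
  haveI : Mono ι := by
    rw [ModuleCat.mono_iff_injective]; exact Submodule.injective_subtype J
  have hιπ : ι ≫ π₀ = 0 := by
    ext x
    exact (Submodule.Quotient.mk_eq_zero J).2 x.2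
  have s : d₀ ≫ π₀ = 0 := by
    rw [show d₀ ≫ π₀ = q ≫ (ι ≫ π₀) from (Category.assoc _ _ _), hιπ, comp_zero]
  have hex : (ShortComplex.mk d₀ π₀ s).Exact := by
    rw [ShortComplex.moduleCat_exact_iff]
    intro x hx
    have hxJ : x ∈ J := (Submodule.Quotient.mk_eq_zero J).1 hx
    obtain ⟨y, hy⟩ := (ModuleCat.epi_iff_surjective q).1 inferInstance ⟨x, hxJ⟩
    refine ⟨y, ?_⟩
    show ι (q y) = x
    rw [hy]
    rfl
  let P := Stmt3Aux.resolution π₀ d₀ s hex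
  let K := (G.mapHomologicalComplex (ComplexShape.down ℕ)).obj P.complex
  -- First isomorphisms: Tor₁ ≅ homology of the tensored resolution
  let e1 : (((Tor (ModuleCat.{u} B) 1).obj Fc).obj (ModuleCat.of B (B ⧸ J))) ≅
      (HomologicalComplex.homologyFunctor _ _ 1).obj K := P.isoLeftDerivedObj G 1
  let e2 : (HomologicalComplex.homologyFunctor (ModuleCat.{u} B) _ 1).obj K ≅
      (K.sc' 2 1 0).homology := K.homologyIsoSc' 2 1 0 (by simp) (by simp)
  -- identify the short complex
  have hf21 : (K.sc' 2 1 0).f = G.map (Projective.d d₀) := by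
    show G.map ((Stmt3Aux.cpx d₀).d 2 1) = _
    rw [Stmt3Aux.cpx_d_2_1]
    rfl
  have hι0 : G.map ι = 0 := by
    apply ModuleCat.hom_ext
    apply TensorProduct.ext'
    rintro f ⟨x, hx⟩
    show f ⊗ₜ[B] x = (0 : (F ⊗[B] ↥J) →ₗ[B] (F ⊗[B] B)) (f ⊗ₜ ⟨x, hx⟩)
    rw [LinearMap.zero_apply]
    calc f ⊗ₜ[B] x = f ⊗ₜ[B] (x • (1 : B)) := by rw [smul_eq_mul, mul_one]
    _ = (x • f) ⊗ₜ[B] (1 : B) := (TensorProduct.smul_tmul x f 1).symm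
    _ = (0 : F) ⊗ₜ[B] (1 : B) := by rw [hF x hx f]
    _ = 0 := TensorProduct.zero_tmul _ _
  have hg10 : (K.sc' 2 1 0).g = 0 := by
    show G.map ((Stmt3Aux.cpx d₀).d 1 0) = 0
    rw [Stmt3Aux.cpx_d_1_0]; exact (G.map_comp q ι).trans (by rw [hι0, comp_zero]; rfl)
  let S₀ : ShortComplex (ModuleCat.{u} B) :=
    ShortComplex.mk (G.map (Projective.d d₀)) (0 : G.obj X₁ ⟶ G.obj X₀) comp_zero
  let eS : K.sc' 2 1 0 ≅ S₀ :=
    ShortComplex.isoMk (Iso.refl _) (Iso.refl _) (Iso.refl _)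
      ((Category.id_comp _).trans (hf21.symm.trans (Category.comp_id _).symm)) ((Category.id_comp _).trans (hg10.symm.trans (Category.comp_id _).symm))
  let e3 : (K.sc' 2 1 0).homology ≅ S₀.homology := ShortComplex.homologyMapIso eS
  -- the cokernel cofork computing the homology
  have hq0 : Projective.d d₀ ≫ q = 0 := by
    rw [← cancel_mono ι]
    rw [Category.assoc, zero_comp]; exact (Category.assoc _ _ _).trans (by rw [kernel.condition]; exact comp_zero)
  have hex2 : (ShortComplex.mk (Projective.d d₀) q hq0).Exact := by
    rw [ShortComplex.exact_iff_of_epi_of_isIso_of_mono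
      (φ := ({ τ₁ := 𝟙 _, τ₂ := 𝟙 _, τ₃ := ι,
               comm₁₂ := (Category.id_comp _).trans (Category.comp_id _).symm, comm₂₃ := Category.id_comp _ } :
        ShortComplex.mk (Projective.d d₀) q hq0 ⟶ ShortComplex.mk (Projective.d d₀) d₀ ((Category.assoc _ _ _).trans (by rw [kernel.condition]; exact comp_zero))))]
    exact exact_d_f d₀
  have hcolim : IsColimit (CokernelCofork.ofπ q hq0) := hex2.gIsCokernel
  have hc₂ := isColimitCoforkMapOfIsColimit' G hq0 hcolim
  -- transport the cofork along the equivalence `F ⊗[B] J ≃ F ⊗[A] I`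
  let EEiso : G.obj Jc ≅ ModuleCat.of B (TensorProduct A F ↥I) :=
    (Stmt3Aux.EE I J F hJdef).toModuleIso
  have w₃ : G.map (Projective.d d₀) ≫ (G.map q ≫ EEiso.hom) = 0 := by
    rw [← Category.assoc, ← G.map_comp, hq0, Functor.map_zero, zero_comp]
  have hc₃ : IsColimit (CokernelCofork.ofπ (G.map q ≫ EEiso.hom) w₃) :=
    IsColimit.ofIsoColimit hc₂ (Cofork.ext EEiso (by simp))
  let hdata : S₀.HomologyData :=
    ShortComplex.HomologyData.ofIsColimitCokernelCofork S₀ rfl _ hc₃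
  let e4 : S₀.homology ≅ ModuleCat.of B (TensorProduct A F ↥I) := hdata.left.homologyIso
  exact e1 ≪≫ e2 ≪≫ e3 ≪≫ e4
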